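/- For the 2-form ω on ℂ³ as above with a > 1: the top power ω³ is a positive multiple of the standard volume form on ℂ³ (so the ω-orientation of ℂ³ is the complex orientation), while for each i the restriction ω²|_{ℂ³_i} is a negative multiple of the standard volume form on ℂ³_i (so the ω-orientation of each coordinate hyperplane is the opposite of the complex orientation). -/

import Mathlib

set_option synthInstance.maxHeartbeats 1000000
set_option maxHeartbeats 1000000

open ExteriorAlgebra

/-- The real-linear functional `dx_i = Re ∘ z_i` on `ℂ^n`. -/
noncomputable def dxF (n : ℕ) (i : Fin n) : Module.Dual ℝ (Fin n → ℂ) :=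
  Complex.reLm.comp ((LinearMap.proj i : (Fin n → ℂ) →ₗ[ℂ] ℂ).restrictScalars ℝ)

/-- The real-linear functional `dy_i = Im ∘ z_i` on `ℂ^n`. -/
noncomputable def dyF (n : ℕ) (i : Fin n) : Module.Dual ℝ (Fin n → ℂ) :=
  Complex.imLm.comp ((LinearMap.proj i : (Fin n → ℂ) →ₗ[ℂ] ℂ).restrictScalars ℝ)

/-- `dx_i` as a degree-1 element of the exterior algebra of the dual of `ℂ^n`. -/
noncomputable def dxE (n : ℕ) (i : Fin n) :
    ExteriorAlgebra ℝ (Module.Dual ℝ (Fin n → ℂ)) :=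
  ExteriorAlgebra.ι ℝ (dxF n i)

/-- `dy_i` as a degree-1 element of the exterior algebra of the dual of `ℂ^n`. -/
noncomputable def dyE (n : ℕ) (i : Fin n) :
    ExteriorAlgebra ℝ (Module.Dual ℝ (Fin n → ℂ)) :=
  ExteriorAlgebra.ι ℝ (dyF n i)

/-- The coordinate area form `dx_i ∧ dy_i`. -/
noncomputable def dxyE (n : ℕ) (i : Fin n) :
    ExteriorAlgebra ℝ (Module.Dual ℝ (Fin n → ℂ)) :=
  dxE n i * dyE n i

/-- The complex volume form of the coordinate subspace `ℂ^n_I`: the wedge of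
`dx_i ∧ dy_i` over `i ∉ I` (in increasing order). -/
noncomputable def volForm (n : ℕ) (I : Finset (Fin n)) :
    ExteriorAlgebra ℝ (Module.Dual ℝ (Fin n → ℂ)) :=
  (((Iᶜ).sort (· ≤ ·)).map fun i => dxyE n i).prod

/-- The projection of `ℂ^n` onto the coordinate subspace `ℂ^n_I` (setting the
coordinates in `I` to zero). -/
noncomputable def coordProj (n : ℕ) (I : Finset (Fin n)) :
    (Fin n → ℂ) →ₗ[ℝ] (Fin n → ℂ) where
  toFun z := fun i => if i ∈ I then 0 else z i
  map_add' := by intro a b; funext i; by_cases h : i ∈ I <;> simp [h]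
  map_smul' := by intro c a; funext i; by_cases h : i ∈ I <;> simp [h]

/-- Pullback of exterior forms on `ℂ^n` along the projection onto `ℂ^n_I`; this computes
the restriction of a form to the coordinate subspace `ℂ^n_I`. -/
noncomputable def pullbackI (n : ℕ) (I : Finset (Fin n)) :
    ExteriorAlgebra ℝ (Module.Dual ℝ (Fin n → ℂ)) →ₐ[ℝ]
      ExteriorAlgebra ℝ (Module.Dual ℝ (Fin n → ℂ)) :=
  ExteriorAlgebra.map ((coordProj n I).dualMap)

/-- The subspace of genuine (grade-2) alternating 2-forms inside the exterior algebra. -/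
noncomputable def grade2 (n : ℕ) :
    Submodule ℝ (ExteriorAlgebra ℝ (Module.Dual ℝ (Fin n → ℂ))) :=
  LinearMap.range (ExteriorAlgebra.ι ℝ (M := Module.Dual ℝ (Fin n → ℂ))) ^ 2

/-- The 2-form of Example 2.7 of the paper, on `ℂ³ ≅ ℝ⁶`. -/
noncomputable def omegaA (a : ℝ) : ExteriorAlgebra ℝ (Module.Dual ℝ (Fin 3 → ℂ)) :=
  (∑ i : Fin 3, dxyE 3 i)
    + a • (dxE 3 0 * dyE 3 1 - dyE 3 0 * dxE 3 1)
    + a • (dxE 3 0 * dyE 3 2 - dyE 3 0 * dxE 3 2)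
    + a • (dxE 3 1 * dyE 3 2 - dyE 3 1 * dxE 3 2)

/-- for `a > 1`, the top power `ω³` is a positive multiple of the standard
(complex) volume form of `ℂ³`, while each restriction `ω²|_{ℂ³_i}` is a negative multiple
of the standard volume form of the coordinate hyperplane `ℂ³_i`. -/
-- ===== auxiliary machinery =====

theorem sortEq (s : Finset (Fin 3)) (l : List (Fin 3)) (h1 : List.Pairwise (· ≤ ·) l)
    (h2 : l.Nodup) (h3 : ∀ x, x ∈ l ↔ x ∈ s) : s.sort (· ≤ ·) = l := by
  refine List.Perm.eq_of_pairwise' (Finset.pairwise_sort _ _) h1 ?_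
  refine (List.perm_ext_iff_of_nodup (Finset.sort_nodup _ _) h2).2 fun x => ?_
  rw [Finset.mem_sort]; exact (h3 x).symm

abbrev E3 := ExteriorAlgebra ℝ (Module.Dual ℝ (Fin 3 → ℂ))

noncomputable def F : Fin 6 → Module.Dual ℝ (Fin 3 → ℂ) :=
  ![dxF 3 0, dyF 3 0, dxF 3 1, dyF 3 1, dxF 3 2, dyF 3 2]
noncomputable def G (i : Fin 6) : E3 := ExteriorAlgebra.ι ℝ (F i)

theorem Gsq (i : Fin 6) : G i * G i = 0 := ι_sq_zero _
theorem Gsq' (i : Fin 6) (c : E3) : G i * (G i * c) = 0 := by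
  rw [← mul_assoc, Gsq, zero_mul]
theorem Gsw {i j : Fin 6} (h : j < i) : G i * G j = -(G j * G i) := by
  have h2 := ι_sq_zero (R := ℝ) (F i + F j)
  rw [map_add, add_mul, mul_add, mul_add, ι_sq_zero, ι_sq_zero, zero_add, add_zero] at h2
  exact eq_neg_of_add_eq_zero_left (show G i * G j + G j * G i = 0 from h2)
theorem Gsw' {i j : Fin 6} (h : j < i) (c : E3) : G i * (G j * c) = -(G j * (G i * c)) := by
  rw [← mul_assoc, Gsw h, neg_mul, mul_assoc]

theorem gx0 : dxE 3 0 = G 0 := rfl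
theorem gy0 : dyE 3 0 = G 1 := rfl
theorem gx1 : dxE 3 1 = G 2 := rfl
theorem gy1 : dyE 3 1 = G 3 := rfl
theorem gx2 : dxE 3 2 = G 4 := rfl
theorem gy2 : dyE 3 2 = G 5 := rfl

theorem homega (a : ℝ) : omegaA a =
    G 0*G 1 + G 2*G 3 + G 4*G 5 + a•(G 0*G 3 - G 1*G 2)
      + a•(G 0*G 5 - G 1*G 4) + a•(G 2*G 5 - G 3*G 4) := by
  rw [omegaA, Fin.sum_univ_three]
  rw [dxyE, dxyE, dxyE, gx0, gy0, gx1, gy1, gx2, gy2]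

theorem hvolE : volForm 3 ∅ = G 0*(G 1*(G 2*(G 3*(G 4*G 5)))) := by
  rw [volForm, sortEq _ [0,1,2] (by decide) (by decide) (by decide)]
  simp only [List.map_cons, List.map_nil, List.prod_cons, List.prod_nil, mul_one]
  simp only [dxyE, gx0, gy0, gx1, gy1, gx2, gy2, mul_assoc]

theorem hvol0 : volForm 3 {0} = G 2*(G 3*(G 4*G 5)) := by
  rw [volForm, sortEq _ [1,2] (by decide) (by decide) (by decide)]
  simp only [List.map_cons, List.map_nil, List.prod_cons, List.prod_nil, mul_one]
  simp only [dxyE, gx1, gy1, gx2, gy2, mul_assoc]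

theorem hvol1 : volForm 3 {1} = G 0*(G 1*(G 4*G 5)) := by
  rw [volForm, sortEq _ [0,2] (by decide) (by decide) (by decide)]
  simp only [List.map_cons, List.map_nil, List.prod_cons, List.prod_nil, mul_one]
  simp only [dxyE, gx0, gy0, gx2, gy2, mul_assoc]

theorem hvol2 : volForm 3 {2} = G 0*(G 1*(G 2*G 3)) := by
  rw [volForm, sortEq _ [0,1] (by decide) (by decide) (by decide)]
  simp only [List.map_cons, List.map_nil, List.prod_cons, List.prod_nil, mul_one]
  simp only [dxyE, gx0, gy0, gx1, gy1, mul_assoc]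

theorem dm_x_mem (I : Finset (Fin 3)) (j : Fin 3) (h : j ∈ I) :
    (coordProj 3 I).dualMap (dxF 3 j) = 0 := by
  ext z; simp [LinearMap.dualMap_apply, coordProj, dxF, h]
theorem dm_x_not (I : Finset (Fin 3)) (j : Fin 3) (h : j ∉ I) :
    (coordProj 3 I).dualMap (dxF 3 j) = dxF 3 j := by
  ext z; simp [LinearMap.dualMap_apply, coordProj, dxF, h]
theorem dm_y_mem (I : Finset (Fin 3)) (j : Fin 3) (h : j ∈ I) :
    (coordProj 3 I).dualMap (dyF 3 j) = 0 := by
  ext z; simp [LinearMap.dualMap_apply, coordProj, dyF, h]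
theorem dm_y_not (I : Finset (Fin 3)) (j : Fin 3) (h : j ∉ I) :
    (coordProj 3 I).dualMap (dyF 3 j) = dyF 3 j := by
  ext z; simp [LinearMap.dualMap_apply, coordProj, dyF, h]
theorem pb0_0 : pullbackI 3 {0} (G 0) = 0 := by
  show pullbackI 3 {0} (ExteriorAlgebra.ι ℝ (dxF 3 0)) = 0
  rw [pullbackI, ExteriorAlgebra.map_apply_ι, dm_x_mem _ _ (by decide), map_zero]

theorem pb0_1 : pullbackI 3 {0} (G 1) = 0 := by
  show pullbackI 3 {0} (ExteriorAlgebra.ι ℝ (dyF 3 0)) = 0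
  rw [pullbackI, ExteriorAlgebra.map_apply_ι, dm_y_mem _ _ (by decide), map_zero]

theorem pb0_2 : pullbackI 3 {0} (G 2) = G 2 := by
  show pullbackI 3 {0} (ExteriorAlgebra.ι ℝ (dxF 3 1)) = G 2
  rw [pullbackI, ExteriorAlgebra.map_apply_ι, dm_x_not _ _ (by decide)]
  rfl

theorem pb0_3 : pullbackI 3 {0} (G 3) = G 3 := by
  show pullbackI 3 {0} (ExteriorAlgebra.ι ℝ (dyF 3 1)) = G 3
  rw [pullbackI, ExteriorAlgebra.map_apply_ι, dm_y_not _ _ (by decide)]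
  rfl

theorem pb0_4 : pullbackI 3 {0} (G 4) = G 4 := by
  show pullbackI 3 {0} (ExteriorAlgebra.ι ℝ (dxF 3 2)) = G 4
  rw [pullbackI, ExteriorAlgebra.map_apply_ι, dm_x_not _ _ (by decide)]
  rfl

theorem pb0_5 : pullbackI 3 {0} (G 5) = G 5 := by
  show pullbackI 3 {0} (ExteriorAlgebra.ι ℝ (dyF 3 2)) = G 5
  rw [pullbackI, ExteriorAlgebra.map_apply_ι, dm_y_not _ _ (by decide)]
  rfl

theorem pb1_0 : pullbackI 3 {1} (G 0) = G 0 := by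
  show pullbackI 3 {1} (ExteriorAlgebra.ι ℝ (dxF 3 0)) = G 0
  rw [pullbackI, ExteriorAlgebra.map_apply_ι, dm_x_not _ _ (by decide)]
  rfl

theorem pb1_1 : pullbackI 3 {1} (G 1) = G 1 := by
  show pullbackI 3 {1} (ExteriorAlgebra.ι ℝ (dyF 3 0)) = G 1
  rw [pullbackI, ExteriorAlgebra.map_apply_ι, dm_y_not _ _ (by decide)]
  rfl

theorem pb1_2 : pullbackI 3 {1} (G 2) = 0 := by
  show pullbackI 3 {1} (ExteriorAlgebra.ι ℝ (dxF 3 1)) = 0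
  rw [pullbackI, ExteriorAlgebra.map_apply_ι, dm_x_mem _ _ (by decide), map_zero]

theorem pb1_3 : pullbackI 3 {1} (G 3) = 0 := by
  show pullbackI 3 {1} (ExteriorAlgebra.ι ℝ (dyF 3 1)) = 0
  rw [pullbackI, ExteriorAlgebra.map_apply_ι, dm_y_mem _ _ (by decide), map_zero]

theorem pb1_4 : pullbackI 3 {1} (G 4) = G 4 := by
  show pullbackI 3 {1} (ExteriorAlgebra.ι ℝ (dxF 3 2)) = G 4
  rw [pullbackI, ExteriorAlgebra.map_apply_ι, dm_x_not _ _ (by decide)]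
  rfl

theorem pb1_5 : pullbackI 3 {1} (G 5) = G 5 := by
  show pullbackI 3 {1} (ExteriorAlgebra.ι ℝ (dyF 3 2)) = G 5
  rw [pullbackI, ExteriorAlgebra.map_apply_ι, dm_y_not _ _ (by decide)]
  rfl

theorem pb2_0 : pullbackI 3 {2} (G 0) = G 0 := by
  show pullbackI 3 {2} (ExteriorAlgebra.ι ℝ (dxF 3 0)) = G 0
  rw [pullbackI, ExteriorAlgebra.map_apply_ι, dm_x_not _ _ (by decide)]
  rfl

theorem pb2_1 : pullbackI 3 {2} (G 1) = G 1 := by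
  show pullbackI 3 {2} (ExteriorAlgebra.ι ℝ (dyF 3 0)) = G 1
  rw [pullbackI, ExteriorAlgebra.map_apply_ι, dm_y_not _ _ (by decide)]
  rfl

theorem pb2_2 : pullbackI 3 {2} (G 2) = G 2 := by
  show pullbackI 3 {2} (ExteriorAlgebra.ι ℝ (dxF 3 1)) = G 2
  rw [pullbackI, ExteriorAlgebra.map_apply_ι, dm_x_not _ _ (by decide)]
  rfl

theorem pb2_3 : pullbackI 3 {2} (G 3) = G 3 := by
  show pullbackI 3 {2} (ExteriorAlgebra.ι ℝ (dyF 3 1)) = G 3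
  rw [pullbackI, ExteriorAlgebra.map_apply_ι, dm_y_not _ _ (by decide)]
  rfl

theorem pb2_4 : pullbackI 3 {2} (G 4) = 0 := by
  show pullbackI 3 {2} (ExteriorAlgebra.ι ℝ (dxF 3 2)) = 0
  rw [pullbackI, ExteriorAlgebra.map_apply_ι, dm_x_mem _ _ (by decide), map_zero]

theorem pb2_5 : pullbackI 3 {2} (G 5) = 0 := by
  show pullbackI 3 {2} (ExteriorAlgebra.ι ℝ (dyF 3 2)) = 0
  rw [pullbackI, ExteriorAlgebra.map_apply_ι, dm_y_mem _ _ (by decide), map_zero]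


theorem cube_eq (a : ℝ) :
    (G 0*G 1 + G 2*G 3 + G 4*G 5 + a•(G 0*G 3 - G 1*G 2)
      + a•(G 0*G 5 - G 1*G 4) + a•(G 2*G 5 - G 3*G 4)) ^ 3
    = (6*(1-a)^2*(1+2*a)) • (G 0*(G 1*(G 2*(G 3*(G 4*G 5))))) := by
  simp only [pow_succ, pow_zero, one_mul, mul_add, add_mul, mul_sub, sub_mul,
    smul_mul_assoc, mul_smul_comm, mul_assoc]
  simp (config := { decide := true }) only [Gsq, Gsq', Gsw, Gsw',
    mul_neg, neg_mul, neg_neg, smul_mul_assoc, mul_smul_comm, smul_smul,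
    mul_zero, zero_mul, add_zero, zero_add, smul_zero, sub_zero, zero_sub, smul_neg]
  module

theorem sqr0_eq (a : ℝ) :
    (G 2*G 3 + G 4*G 5 + a•(G 2*G 5 - G 3*G 4)) ^ 2
    = (2*(1-a^2)) • (G 2*(G 3*(G 4*G 5))) := by
  simp only [pow_succ, pow_zero, one_mul, mul_add, add_mul, mul_sub, sub_mul,
    smul_mul_assoc, mul_smul_comm, mul_assoc]
  simp (config := { decide := true }) only [Gsq, Gsq', Gsw, Gsw',
    mul_neg, neg_mul, neg_neg, smul_mul_assoc, mul_smul_comm, smul_smul,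
    mul_zero, zero_mul, add_zero, zero_add, smul_zero, sub_zero, zero_sub, smul_neg]
  module

theorem sqr1_eq (a : ℝ) :
    (G 0*G 1 + G 4*G 5 + a•(G 0*G 5 - G 1*G 4)) ^ 2
    = (2*(1-a^2)) • (G 0*(G 1*(G 4*G 5))) := by
  simp only [pow_succ, pow_zero, one_mul, mul_add, add_mul, mul_sub, sub_mul,
    smul_mul_assoc, mul_smul_comm, mul_assoc]
  simp (config := { decide := true }) only [Gsq, Gsq', Gsw, Gsw',
    mul_neg, neg_mul, neg_neg, smul_mul_assoc, mul_smul_comm, smul_smul,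
    mul_zero, zero_mul, add_zero, zero_add, smul_zero, sub_zero, zero_sub, smul_neg]
  module

theorem sqr2_eq (a : ℝ) :
    (G 0*G 1 + G 2*G 3 + a•(G 0*G 3 - G 1*G 2)) ^ 2
    = (2*(1-a^2)) • (G 0*(G 1*(G 2*G 3))) := by
  simp only [pow_succ, pow_zero, one_mul, mul_add, add_mul, mul_sub, sub_mul,
    smul_mul_assoc, mul_smul_comm, mul_assoc]
  simp (config := { decide := true }) only [Gsq, Gsq', Gsw, Gsw',
    mul_neg, neg_mul, neg_neg, smul_mul_assoc, mul_smul_comm, smul_smul,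
    mul_zero, zero_mul, add_zero, zero_add, smul_zero, sub_zero, zero_sub, smul_neg]
  module


theorem stmt8 (a : ℝ) (ha : 1 < a) :
    (∃ c : ℝ, 0 < c ∧ (omegaA a) ^ 3 = c • volForm 3 ∅) ∧
    (∀ i : Fin 3, ∃ c : ℝ, c < 0 ∧
      pullbackI 3 {i} ((omegaA a) ^ 2) = c • volForm 3 {i}) := by
  have hpos : (0:ℝ) < 6*(1-a)^2*(1+2*a) := by
    nlinarith [pow_pos (show (0:ℝ) < a - 1 by linarith) 2]
  have hneg : (2*(1-a^2) : ℝ) < 0 := by nlinarith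
  constructor
  · refine ⟨6*(1-a)^2*(1+2*a), hpos, ?_⟩
    rw [homega, hvolE]
    exact cube_eq a
  · intro i
    fin_cases i
    · refine ⟨2*(1-a^2), hneg, ?_⟩
      show pullbackI 3 {0} ((omegaA a)^2) = (2*(1-a^2) : ℝ) • volForm 3 {0}
      rw [show pullbackI 3 {0} ((omegaA a)^2) = (pullbackI 3 {0} (omegaA a))^2 from
        map_pow _ _ 2]
      rw [homega, hvol0]
      simp only [map_add, map_sub, map_smul, map_mul,
        pb0_0, pb0_1, pb0_2, pb0_3, pb0_4, pb0_5,
        zero_mul, mul_zero, sub_zero, zero_sub, smul_zero, smul_neg, neg_zero,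
        add_zero, zero_add]
      exact sqr0_eq a
    · refine ⟨2*(1-a^2), hneg, ?_⟩
      show pullbackI 3 {1} ((omegaA a)^2) = (2*(1-a^2) : ℝ) • volForm 3 {1}
      rw [show pullbackI 3 {1} ((omegaA a)^2) = (pullbackI 3 {1} (omegaA a))^2 from
        map_pow _ _ 2]
      rw [homega, hvol1]
      simp only [map_add, map_sub, map_smul, map_mul,
        pb1_0, pb1_1, pb1_2, pb1_3, pb1_4, pb1_5,
        zero_mul, mul_zero, sub_zero, zero_sub, smul_zero, smul_neg, neg_zero,
        add_zero, zero_add]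
      exact sqr1_eq a
    · refine ⟨2*(1-a^2), hneg, ?_⟩
      show pullbackI 3 {2} ((omegaA a)^2) = (2*(1-a^2) : ℝ) • volForm 3 {2}
      rw [show pullbackI 3 {2} ((omegaA a)^2) = (pullbackI 3 {2} (omegaA a))^2 from
        map_pow _ _ 2]
      rw [homega, hvol2]
      simp only [map_add, map_sub, map_smul, map_mul,
        pb2_0, pb2_1, pb2_2, pb2_3, pb2_4, pb2_5,
        zero_mul, mul_zero, sub_zero, zero_sub, smul_zero, smul_neg, neg_zero,
        add_zero, zero_add]
      exact sqr2_eq a
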